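/- Let E be a finite-dimensional real inner product space, Q ⊆ E a nonempty convex set, h : E → ℝ a differentiable convex function, and V(y,x) = h(y) − h(x) − ⟨∇h(x), y − x⟩ the associated Bregman divergence. Let y ∈ E and suppose x⁺ ∈ Q minimizes the function z ↦ V(z, y) over Q. Then for every u ∈ Q one has V(u, x⁺) ≤ V(u, y) (Pythagorean theorem for Bregman projections). -/

import Mathlib

open scoped RealInnerProductSpace

/-- The Bregman divergence `V(y,x) = h(y) − h(x) − ⟨∇h(x), y − x⟩`. -/
noncomputable def breg {E : Type*} [NormedAddCommGroup E] [InnerProductSpace ℝ E]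
    [CompleteSpace E] (h : E → ℝ) (y x : E) : ℝ :=
  h y - h x - ⟪gradient h x, y - x⟫

/-- Gradient inequality for convex differentiable functions. -/
theorem grad_ineq {E : Type*} [NormedAddCommGroup E] [InnerProductSpace ℝ E]
    [CompleteSpace E] (h : E → ℝ) (hdiff : Differentiable ℝ h)
    (hconv : ConvexOn ℝ Set.univ h) (a b : E) :
    ⟪gradient h a, b - a⟫ ≤ h b - h a := by
  set L : ℝ →ᵃ[ℝ] E := AffineMap.lineMap a b with hL
  have hg : ConvexOn ℝ Set.univ (h ∘ L) := by
    simpa using hconv.comp_affineMap L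
  have hline : HasDerivAt (fun t : ℝ => L t) (b - a) 0 := by
    have heq : (fun t : ℝ => L t) = fun t : ℝ => t • (b - a) + a := by
      funext t; simp [hL, AffineMap.lineMap_apply_module]; module
    rw [heq]
    simpa using ((hasDerivAt_id (0:ℝ)).smul_const (b - a)).add_const a
  have hfd : HasFDerivAt h (InnerProductSpace.toDual ℝ E (gradient h a)) (L 0) := by
    have := (hdiff (L 0)).hasGradientAt
    rw [hasGradientAt_iff_hasFDerivAt] at this
    simpa [hL] using this
  have hd : HasDerivAt (h ∘ L) ⟪gradient h a, b - a⟫ 0 := by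
    simpa using hfd.comp_hasDerivAt 0 hline
  have := hg.le_slope_of_hasDerivAt (Set.mem_univ (0:ℝ)) (Set.mem_univ (1:ℝ))
    (by norm_num) hd
  simpa [slope, hL, AffineMap.lineMap_apply_module] using this

/-- Pythagorean theorem for Bregman projections: if `x⁺ ∈ Q` minimizes `z ↦ V(z, y)`
over the convex set `Q`, then `V(u, x⁺) ≤ V(u, y)` for every `u ∈ Q`. -/
theorem bregman_pythagorean
    {E : Type*} [NormedAddCommGroup E] [InnerProductSpace ℝ E] [FiniteDimensional ℝ E]
    (Q : Set E) (hQne : Q.Nonempty) (hQconv : Convex ℝ Q)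
    (h : E → ℝ) (hdiff : Differentiable ℝ h) (hconv : ConvexOn ℝ Set.univ h)
    (y : E) (xp : E) (hxpQ : xp ∈ Q)
    (hxp : IsMinOn (fun z => breg h z y) Q xp) :
    ∀ u ∈ Q, breg h u xp ≤ breg h u y := by
  intro u huQ
  -- first-order optimality
  have hfd : HasFDerivAt (fun z => breg h z y)
      (InnerProductSpace.toDual ℝ E (gradient h xp)
        - InnerProductSpace.toDual ℝ E (gradient h y)) xp := by
    have h1 : HasFDerivAt h (InnerProductSpace.toDual ℝ E (gradient h xp)) xp := by
      have := (hdiff xp).hasGradientAt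
      rwa [hasGradientAt_iff_hasFDerivAt] at this
    have h2 : HasFDerivAt (fun z => ⟪gradient h y, z - y⟫)
        (InnerProductSpace.toDual ℝ E (gradient h y)) xp := by
      have : HasFDerivAt (fun z : E => (InnerProductSpace.toDual ℝ E (gradient h y)) z)
          (InnerProductSpace.toDual ℝ E (gradient h y)) xp :=
        (InnerProductSpace.toDual ℝ E (gradient h y)).hasFDerivAt
      have := (this.sub_const ⟪gradient h y, y⟫)
      convert this using 2 with z
      · rfl
      · rfl
      · simp [inner_sub_right]
    have := (h1.sub_const (h y)).sub h2
    convert this using 2 with z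
    · rfl
    · rfl
    · simp [breg]
  have hcone : u - xp ∈ posTangentConeAt Q xp :=
    sub_mem_posTangentConeAt_of_segment_subset (hQconv.segment_subset hxpQ huQ)
  have hfo : (0:ℝ) ≤ ⟪gradient h xp, u - xp⟫ - ⟪gradient h y, u - xp⟫ := by
    have := hxp.localize.hasFDerivWithinAt_nonneg hfd.hasFDerivWithinAt hcone
    simpa using this
  have hgi : ⟪gradient h y, xp - y⟫ ≤ h xp - h y := grad_ineq h hdiff hconv y xp
  have hsplit : ⟪gradient h y, u - y⟫
      = ⟪gradient h y, u - xp⟫ + ⟪gradient h y, xp - y⟫ := by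
    rw [← inner_add_right, sub_add_sub_cancel]
  simp only [breg]
  rw [hsplit] at *
  linarith
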